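/- Let (X,d) be a metric space, a ≤ b reals, and γ : [a,b] → X of bounded variation. Suppose φL, φR : [a,b] → [0,∞) satisfy: φL(a) = 0, φR(b) = 0, for every t ∈ (a,b] one has d(γ(s), γ(t)) → φL(t) as s → t from the left within [a,t), and for every t ∈ [a,b) one has d(γ(s), γ(t)) → φR(t) as s → t from the right within (t,b]. Then for every finite set F ⊆ [a,b] one has Σ_{t ∈ F} (φL(t) + φR(t)) ≤ V(γ). -/
import Mathlib

private lemma stmt4_split {X : Type*} [MetricSpace X] (γ : ℝ → X) {u m v : ℝ}
    (h1 : u ≤ m) (h2 : m ≤ v) :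
    eVariationOn γ (Set.Icc u m) + eVariationOn γ (Set.Icc m v)
      = eVariationOn γ (Set.Icc u v) := by
  have := eVariationOn.Icc_add_Icc γ (s := Set.univ) h1 h2 (Set.mem_univ m)
  simpa using this

/-- For a function of bounded variation on `[a,b]`, the sum of the
left-jumps and right-jumps over any finite set of points is bounded by the
variation. -/
theorem stmt4 {X : Type*} [MetricSpace X] {a b : ℝ} (hab : a ≤ b)
    (γ : ℝ → X) (hγ : BoundedVariationOn γ (Set.Icc a b))
    (φL φR : ℝ → ℝ)
    (hL0 : ∀ t ∈ Set.Icc a b, 0 ≤ φL t) (hR0 : ∀ t ∈ Set.Icc a b, 0 ≤ φR t)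
    (hLa : φL a = 0) (hRb : φR b = 0)
    (hL : ∀ t ∈ Set.Ioc a b,
        Filter.Tendsto (fun s => dist (γ s) (γ t))
          (nhdsWithin t (Set.Ico a t)) (nhds (φL t)))
    (hR : ∀ t ∈ Set.Ico a b,
        Filter.Tendsto (fun s => dist (γ s) (γ t))
          (nhdsWithin t (Set.Ioc t b)) (nhds (φR t))) :
    ∀ F : Finset ℝ, ↑F ⊆ Set.Icc a b →
      ∑ t ∈ F, (φL t + φR t) ≤ (eVariationOn γ (Set.Icc a b)).toReal := by
  -- Key bound for left jumps
  have key1 : ∀ t ∈ Set.Ioc a b, ∀ u ∈ Set.Ico a t,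
      ENNReal.ofReal (φL t) ≤ eVariationOn γ (Set.Icc u t) := by
    intro t ht u hu
    have hne : (nhdsWithin t (Set.Ico a t)).NeBot := right_nhdsWithin_Ico_neBot ht.1
    have htend : Filter.Tendsto (fun s => ENNReal.ofReal (dist (γ s) (γ t)))
        (nhdsWithin t (Set.Ico a t)) (nhds (ENNReal.ofReal (φL t))) :=
      (ENNReal.continuous_ofReal.tendsto _).comp (hL t ht)
    refine le_of_tendsto htend ?_
    filter_upwards [nhdsWithin_le_nhds (Ioi_mem_nhds hu.2), self_mem_nhdsWithin]
      with s hs1 hs2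
    rw [← edist_dist]
    exact eVariationOn.edist_le γ ⟨le_of_lt hs1, hs2.2.le⟩ ⟨hu.2.le, le_rfl⟩
  -- Key bound for right jumps
  have key2 : ∀ t ∈ Set.Ico a b, ∀ v ∈ Set.Ioc t b,
      ENNReal.ofReal (φR t) ≤ eVariationOn γ (Set.Icc t v) := by
    intro t ht v hv
    have hne : (nhdsWithin t (Set.Ioc t b)).NeBot := left_nhdsWithin_Ioc_neBot ht.2
    have htend : Filter.Tendsto (fun s => ENNReal.ofReal (dist (γ s) (γ t)))
        (nhdsWithin t (Set.Ioc t b)) (nhds (ENNReal.ofReal (φR t))) :=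
      (ENNReal.continuous_ofReal.tendsto _).comp (hR t ht)
    refine le_of_tendsto htend ?_
    filter_upwards [nhdsWithin_le_nhds (Iio_mem_nhds hv.1), self_mem_nhdsWithin]
      with s hs1 hs2
    rw [← edist_dist]
    exact eVariationOn.edist_le γ ⟨hs2.1.le, le_of_lt hs1⟩ ⟨le_rfl, hv.1.le⟩
  -- Main claim by strong induction on the finite set
  have claim : ∀ F : Finset ℝ, ∀ v, v ∈ Set.Icc a b → ↑F ⊆ Set.Icc a v →
      (v ∈ F → v = b) →
      ∑ t ∈ F, (ENNReal.ofReal (φL t) + ENNReal.ofReal (φR t))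
        ≤ eVariationOn γ (Set.Icc a v) := by
    intro F
    induction F using Finset.strongInduction with
    | _ F ih =>
      intro v hv hFv hvF
      rcases F.eq_empty_or_nonempty with rfl | hne
      · simp
      set m := F.max' hne with hm
      have hmF : m ∈ F := F.max'_mem hne
      have hmv : m ≤ v := (hFv hmF).2
      have ham : a ≤ m := (hFv hmF).1
      set F' := F.erase m with hF'def
      have hF'ssub : F' ⊂ F := Finset.erase_ssubset hmF
      have hF'lt : ∀ t ∈ F', t < m := fun t ht =>
        lt_of_le_of_ne (F.le_max' t (Finset.mem_of_mem_erase ht))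
          (Finset.ne_of_mem_erase ht)
      obtain ⟨u, p1, p2, p3, p4, p5⟩ : ∃ u, a ≤ u ∧ u ≤ m ∧ ↑F' ⊆ Set.Icc a u ∧
          u ∉ F' ∧ (u = m → m = a) := by
        rcases F'.eq_empty_or_nonempty with hF' | hF'
        · exact ⟨a, le_rfl, ham, by simp [hF'], by simp [hF'], fun h => h.symm⟩
        · set M := F'.max' hF' with hM
          have hMm : M < m := hF'lt M (F'.max'_mem hF')
          have haM : a ≤ M := (hFv (Finset.mem_of_mem_erase (F'.max'_mem hF'))).1
          refine ⟨(M + m) / 2, by linarith, by linarith, ?_, ?_, by intro h; linarith⟩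
          · intro t ht
            have ht' : t ∈ F' := ht
            have := F'.le_max' t ht'
            exact ⟨(hFv (Finset.mem_of_mem_erase ht')).1, by simp only [← hM] at this ⊢; linarith⟩
          · intro hmem
            have := F'.le_max' _ hmem
            simp only [← hM] at this; linarith
      have hub : u ≤ b := p2.trans (hmv.trans hv.2)
      have hIH : ∑ t ∈ F', (ENNReal.ofReal (φL t) + ENNReal.ofReal (φR t))
          ≤ eVariationOn γ (Set.Icc a u) :=
        ih F' hF'ssub u ⟨p1, hub⟩ p3 (fun h => absurd h p4)
      have hLm : ENNReal.ofReal (φL m) ≤ eVariationOn γ (Set.Icc u m) := by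
        rcases p2.lt_or_eq with hlt | heq
        · exact key1 m ⟨lt_of_le_of_lt p1 hlt, hmv.trans hv.2⟩ u ⟨p1, hlt⟩
        · have : m = a := p5 heq
          simp [this, hLa]
      have hRm : ENNReal.ofReal (φR m) ≤ eVariationOn γ (Set.Icc m v) := by
        rcases hmv.lt_or_eq with hlt | heq
        · exact key2 m ⟨ham, lt_of_lt_of_le hlt hv.2⟩ v ⟨hlt, hv.2⟩
        · have : m = b := heq.trans (hvF (heq ▸ hmF))
          simp [this, hRb]
      calc ∑ t ∈ F, (ENNReal.ofReal (φL t) + ENNReal.ofReal (φR t))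
          = ∑ t ∈ F', (ENNReal.ofReal (φL t) + ENNReal.ofReal (φR t))
            + (ENNReal.ofReal (φL m) + ENNReal.ofReal (φR m)) :=
            (Finset.sum_erase_add F _ hmF).symm
        _ ≤ eVariationOn γ (Set.Icc a u)
            + (eVariationOn γ (Set.Icc u m) + eVariationOn γ (Set.Icc m v)) :=
            add_le_add hIH (add_le_add hLm hRm)
        _ = eVariationOn γ (Set.Icc a u) + eVariationOn γ (Set.Icc u v) := by
            rw [stmt4_split γ p2 hmv]
        _ = eVariationOn γ (Set.Icc a v) := stmt4_split γ p1 (p2.trans hmv)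
  -- Conclude
  intro F hF
  have hnn : ∀ t ∈ F, 0 ≤ φL t + φR t := fun t ht =>
    add_nonneg (hL0 t (hF ht)) (hR0 t (hF ht))
  have h1 : ENNReal.ofReal (∑ t ∈ F, (φL t + φR t)) ≤ eVariationOn γ (Set.Icc a b) := by
    rw [ENNReal.ofReal_sum_of_nonneg hnn]
    refine le_trans (Finset.sum_le_sum fun t ht => ENNReal.ofReal_add_le)
      (claim F b ⟨hab, le_rfl⟩ hF (fun _ => rfl))
  calc ∑ t ∈ F, (φL t + φR t)
      = (ENNReal.ofReal (∑ t ∈ F, (φL t + φR t))).toReal :=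
        (ENNReal.toReal_ofReal (Finset.sum_nonneg hnn)).symm
    _ ≤ (eVariationOn γ (Set.Icc a b)).toReal := ENNReal.toReal_mono hγ h1
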